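/- Suppose λ ∈ ℝ satisfies λ ≥ F_x + C_x for every x ∈ S and Σ_{x∈S} y_x(λ) = 1. Then y(λ) maximizes the objective g over the feasible set: for every z ∈ ℝ^S with z_x ≥ ε for all x ∈ S and Σ_{x∈S} z_x = 1, one has Σ_{x∈S} (C_x·log z_x + F_x·z_x) ≤ Σ_{x∈S} (C_x·log y_x(λ) + F_x·y_x(λ)). -/
import Mathlib


open scoped BigOperators

noncomputable section

/-- **Lemma 5 of the paper, optimality part.** If `λ ≥ F_x + C_x` for every
`x` and the vector `y(λ)` given by `y_x(λ) = ε` when `C_x = 0` and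
`y_x(λ) = max(C_x/(λ − F_x), ε)` when `C_x > 0` sums to `1`, then `y(λ)` maximizes
`Σ_x (C_x·log y_x + F_x·y_x)` over the feasible set
`{z : z_x ≥ ε for all x, Σ_x z_x = 1}`. -/
theorem kl_min_step_optimal {ι : Type*} [Fintype ι] [Nonempty ι]
    (C F : ι → ℝ) (hC : ∀ x, 0 ≤ C x)
    (ε : ℝ) (hε : 0 < ε) (hkε : (Fintype.card ι : ℝ) * ε ≤ 1)
    (lam : ℝ) (hlam : ∀ x, F x + C x ≤ lam)
    (y : ι → ℝ) (hy : ∀ x, y x = if C x = 0 then ε else max (C x / (lam - F x)) ε)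
    (hysum : ∑ x, y x = 1) :
    ∀ z : ι → ℝ, (∀ x, ε ≤ z x) → (∑ x, z x = 1) →
      ∑ x, (C x * Real.log (z x) + F x * z x)
        ≤ ∑ x, (C x * Real.log (y x) + F x * y x) := by
  intro z hz hzsum
  have hyε : ∀ x, ε ≤ y x := by
    intro x; rw [hy x]
    split
    · exact le_refl ε
    · exact le_max_right _ _
  have hypos : ∀ x, 0 < y x := fun x => hε.trans_le (hyε x)
  have hzpos : ∀ x, 0 < z x := fun x => hε.trans_le (hz x)
  set g : ι → ℝ := fun x => C x / y x + F x with hg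
  -- per-term linearization via concavity of log
  have key : ∀ x, C x * Real.log (z x) + F x * z x
      ≤ C x * Real.log (y x) + F x * y x + g x * (z x - y x) := by
    intro x
    have h1 : Real.log (z x) - Real.log (y x) ≤ (z x - y x) / y x := by
      have h := Real.log_le_sub_one_of_pos (div_pos (hzpos x) (hypos x))
      rw [Real.log_div (hzpos x).ne' (hypos x).ne'] at h
      calc Real.log (z x) - Real.log (y x) ≤ z x / y x - 1 := h
        _ = (z x - y x) / y x := by rw [sub_div, div_self (hypos x).ne']
    have h2 : C x * (Real.log (z x) - Real.log (y x)) ≤ C x * ((z x - y x) / y x) :=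
      mul_le_mul_of_nonneg_left h1 (hC x)
    have h3 : C x * (Real.log (z x) - Real.log (y x)) ≤ C x / y x * (z x - y x) := by
      calc C x * (Real.log (z x) - Real.log (y x)) ≤ C x * ((z x - y x) / y x) := h2
        _ = C x / y x * (z x - y x) := by ring
    have hgx : g x = C x / y x + F x := rfl
    rw [hgx]
    nlinarith [h3]
  -- gradient condition: (g x - lam) * (z x - y x) ≤ 0
  have grad : ∀ x, (g x - lam) * (z x - y x) ≤ 0 := by
    intro x
    by_cases hc : C x = 0
    · have hyx : y x = ε := by rw [hy x, if_pos hc]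
      have hgx : g x = F x := by simp [hg, hc]
      have h1 : g x - lam ≤ 0 := by
        have h := hlam x; rw [hgx]; linarith [hc ▸ h]
      have h2 : 0 ≤ z x - y x := by rw [hyx]; linarith [hz x]
      exact mul_nonpos_of_nonpos_of_nonneg h1 h2
    · have hcpos : 0 < C x := lt_of_le_of_ne (hC x) (Ne.symm hc)
      have hlf : 0 < lam - F x := by linarith [hlam x]
      rcases le_total ε (C x / (lam - F x)) with hle | hle
      · have hyx : y x = C x / (lam - F x) := by
          rw [hy x, if_neg hc, max_eq_left hle]
        have hgx : g x = lam := by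
          show C x / y x + F x = lam
          rw [hyx, div_div_eq_mul_div, mul_comm, mul_div_assoc, div_self hc, mul_one]
          ring
        rw [hgx]; simp
      · have hyx : y x = ε := by rw [hy x, if_neg hc, max_eq_right hle]
        have h1 : g x - lam ≤ 0 := by
          have hdiv : C x / ε ≤ lam - F x := by
            rw [div_le_iff₀ hε]
            have h := (div_le_iff₀ hlf).mp hle
            linarith
          show C x / y x + F x - lam ≤ 0
          rw [hyx]; linarith
        have h2 : 0 ≤ z x - y x := by rw [hyx]; linarith [hz x]
        exact mul_nonpos_of_nonpos_of_nonneg h1 h2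
  have e2 : ∑ x, g x * (z x - y x) ≤ 0 := by
    have e : ∀ x ∈ Finset.univ, g x * (z x - y x)
        = (g x - lam) * (z x - y x) + lam * (z x - y x) := fun x _ => by ring
    rw [Finset.sum_congr rfl e, Finset.sum_add_distrib]
    have e3 : ∑ x, lam * (z x - y x) = 0 := by
      rw [← Finset.mul_sum, Finset.sum_sub_distrib, hzsum, hysum]; ring
    have e4 : ∑ x, (g x - lam) * (z x - y x) ≤ 0 :=
      Finset.sum_nonpos fun x _ => grad x
    linarith
  calc ∑ x, (C x * Real.log (z x) + F x * z x)
      ≤ ∑ x, (C x * Real.log (y x) + F x * y x + g x * (z x - y x)) :=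
        Finset.sum_le_sum fun x _ => key x
    _ = ∑ x, (C x * Real.log (y x) + F x * y x) + ∑ x, g x * (z x - y x) := by
        rw [Finset.sum_add_distrib]
    _ ≤ ∑ x, (C x * Real.log (y x) + F x * y x) := by linarith

end
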